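/- Let d ≥ 1 be an integer, let G be a d-regular triangle-free simple graph on a finite vertex set V, and let {u,v} be an edge of G. Then for every pair of labels k1, k2 ∈ {a,b} and integers 0 ≤ i1, i2 ≤ d, the number of functions c : V → {a,b} satisfying c(u) = k1, ℓ_c(u) = i1, c(v) = k2 and ℓ_c(v) = i2, divided by 2^|V|, equals 4^{-d}·C(d-1,i1)·C(d-1,i2) if k1 ≠ k2, and equals 4^{-d}·C(d-1,i1-1)·C(d-1,i2-1) if k1 = k2. -/

import Mathlib

open Finset

private def recon {V : Type*} [DecidableEq V] (u v : V) (A B : Finset V)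
    (k1 k2 : Bool) (p : Finset V × Finset V × Finset V) : V → Bool := fun x =>
  if x = u then k1 else if x = v then k2 else
  if x ∈ A then (if x ∈ p.1 then k1 else !k1) else
  if x ∈ B then (if x ∈ p.2.1 then k2 else !k2) else
  decide (x ∈ p.2.2)

section
variable {V : Type*} [Fintype V] [DecidableEq V] {u v : V} {A B : Finset V}
  {k1 k2 : Bool} {p : Finset V × Finset V × Finset V}

private lemma reconA (huA : u ∉ A) (hvA : v ∉ A) (hS1 : p.1 ⊆ A) :
    A.filter (fun x => recon u v A B k1 k2 p x = k1) = p.1 := by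
  ext x
  simp only [mem_filter]; simp only [recon]
  constructor
  · rintro ⟨hxA, hx⟩
    have hxu : x ≠ u := fun h => huA (h ▸ hxA)
    have hxv : x ≠ v := fun h => hvA (h ▸ hxA)
    simp only [hxu, hxv, hxA, if_false, if_true] at hx
    by_contra hxS
    rw [if_neg hxS] at hx
    simp at hx
  · intro hx
    have hxA : x ∈ A := hS1 hx
    have hxu : x ≠ u := fun h => huA (h ▸ hxA)
    have hxv : x ≠ v := fun h => hvA (h ▸ hxA)
    simp [hxu, hxv, hxA, hx]

private lemma reconB (hAB : Disjoint A B) (huB : u ∉ B) (hvB : v ∉ B) (hS2 : p.2.1 ⊆ B) :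
    B.filter (fun x => recon u v A B k1 k2 p x = k2) = p.2.1 := by
  ext x
  simp only [mem_filter]; simp only [recon]
  constructor
  · rintro ⟨hxB, hx⟩
    have hxu : x ≠ u := fun h => huB (h ▸ hxB)
    have hxv : x ≠ v := fun h => hvB (h ▸ hxB)
    have hxA : x ∉ A := fun h => (disjoint_left.mp hAB) h hxB
    simp only [hxu, hxv, hxA, hxB, if_false, if_true] at hx
    by_contra hxS
    rw [if_neg hxS] at hx
    simp at hx
  · intro hx
    have hxB : x ∈ B := hS2 hx
    have hxu : x ≠ u := fun h => huB (h ▸ hxB)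
    have hxv : x ≠ v := fun h => hvB (h ▸ hxB)
    have hxA : x ∉ A := fun h => (disjoint_left.mp hAB) h hxB
    simp [hxu, hxv, hxA, hxB, hx]

private lemma reconR (hT : p.2.2 ⊆ Finset.univ \ (insert u (insert v (A ∪ B)))) :
    (Finset.univ \ (insert u (insert v (A ∪ B)))).filter
      (fun x => recon u v A B k1 k2 p x = true) = p.2.2 := by
  ext x
  simp only [mem_filter]; simp only [recon]
  constructor
  · rintro ⟨hxR, hx⟩
    simp only [mem_sdiff, mem_insert, mem_union, not_or] at hxR
    obtain ⟨-, hxu, hxv, hxA, hxB⟩ := hxR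
    simp only [hxu, hxv, hxA, hxB, if_false] at hx
    exact of_decide_eq_true hx
  · intro hx
    have hxR := hT hx
    refine ⟨hxR, ?_⟩
    simp only [mem_sdiff, mem_insert, mem_union, not_or] at hxR
    obtain ⟨-, hxu, hxv, hxA, hxB⟩ := hxR
    simp [hxu, hxv, hxA, hxB, hx]

end

lemma core {V : Type*} [Fintype V] [DecidableEq V] (u v : V) (huv : u ≠ v)
    (A B : Finset V) (hAB : Disjoint A B) (huA : u ∉ A) (huB : u ∉ B)
    (hvA : v ∉ A) (hvB : v ∉ B) (k1 k2 : Bool) (j1 j2 : ℕ) :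
    (Finset.univ.filter (fun c : V → Bool =>
      c u = k1 ∧ c v = k2 ∧ (A.filter (fun x => c x = k1)).card = j1 ∧
      (B.filter (fun x => c x = k2)).card = j2)).card
    = A.card.choose j1 * (B.card.choose j2 *
        2 ^ (Fintype.card V - (2 + A.card + B.card))) := by
  classical
  set R : Finset V := Finset.univ \ (insert u (insert v (A ∪ B))) with hR
  have hcardR : R.card = Fintype.card V - (2 + A.card + B.card) := by
    rw [hR, card_sdiff_of_subset (subset_univ _), card_univ]
    congr 1
    rw [card_insert_of_notMem (by simp [huv, huA, huB]),
      card_insert_of_notMem (by simp [hvA, hvB]),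
      card_union_of_disjoint hAB]
    ring
  rw [← hcardR, ← Finset.card_powersetCard, ← Finset.card_powersetCard,
    ← Finset.card_powerset, ← Finset.card_product, ← Finset.card_product]
  refine Finset.card_nbij'
    (fun c => (A.filter (fun x => c x = k1),
      (B.filter (fun x => c x = k2), R.filter (fun x => c x = true))))
    (recon u v A B k1 k2)
    ?_ ?_ ?_ ?_
  · intro c hc
    simp only [mem_coe, mem_filter, mem_univ, true_and] at hc
    obtain ⟨h1, h2, h3, h4⟩ := hc
    simp only [mem_coe, mem_product, mem_powersetCard, mem_powerset]
    exact ⟨⟨filter_subset _ _, h3⟩, ⟨filter_subset _ _, h4⟩, filter_subset _ _⟩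
  · intro p hp
    simp only [mem_coe, mem_product, mem_powersetCard, mem_powerset] at hp
    obtain ⟨⟨hS1, hc1⟩, ⟨hS2, hc2⟩, hT⟩ := hp
    simp only [mem_coe, mem_filter, mem_univ, true_and]
    refine ⟨by simp [recon], by simp [recon, huv.symm], ?_, ?_⟩
    · rw [reconA huA hvA hS1, hc1]
    · rw [reconB hAB huB hvB hS2, hc2]
  · intro c hc
    simp only [mem_coe, mem_filter, mem_univ, true_and] at hc
    obtain ⟨h1, h2, h3, h4⟩ := hc
    funext x
    simp only [recon]
    by_cases hxu : x = u
    · simp [hxu, h1]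
    by_cases hxv : x = v
    · simp [hxv, Ne.symm huv, h2]
    by_cases hxA : x ∈ A
    · simp only [hxu, hxv, hxA, if_false, if_true, mem_filter]
      by_cases h : c x = k1
      · simp [h, hxA]
      · simp only [hxA, h, true_and, and_false, if_false]
        cases hk : c x <;> cases k1 <;> simp_all
    by_cases hxB : x ∈ B
    · simp only [hxu, hxv, hxA, hxB, if_false, if_true, mem_filter]
      by_cases h : c x = k2
      · simp [h, hxB]
      · simp only [hxB, h, true_and, and_false, if_false]
        cases hk : c x <;> cases k2 <;> simp_all
    · have hxR : x ∈ R := by simp [hR, hxu, hxv, hxA, hxB]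
      simp only [hxu, hxv, hxA, hxB, if_false, mem_filter, hxR, true_and]
      cases hk : c x <;> simp
  · intro p hp
    simp only [mem_coe, mem_product, mem_powersetCard, mem_powerset] at hp
    obtain ⟨⟨hS1, hc1⟩, ⟨hS2, hc2⟩, hT⟩ := hp
    have e1 := reconA (B := B) (k1 := k1) (k2 := k2) (p := p) huA hvA hS1
    have e2 := reconB (k1 := k1) (k2 := k2) (p := p) hAB huB hvB hS2
    have e3 := reconR (k1 := k1) (k2 := k2) (p := p) hT
    exact Prod.ext e1 (Prod.ext e2 e3)

/-- Binomial coefficient with integer lower index, following the convention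
`C(n,k) = 0` for `k < 0` (and `k > n`). -/
def chooseZ (n : ℕ) (k : ℤ) : ℕ := if 0 ≤ k then n.choose k.toNat else 0

theorem stmt0 {V : Type*} [Fintype V] [DecidableEq V]
    (d : ℕ) (hd : 1 ≤ d) (G : SimpleGraph V) [DecidableRel G.Adj]
    (hreg : G.IsRegularOfDegree d) (htf : G.CliqueFree 3)
    (u v : V) (huv : G.Adj u v)
    (k1 k2 : Bool) (i1 i2 : ℕ) (hi1 : i1 ≤ d) (hi2 : i2 ≤ d) :
    ((Finset.univ.filter (fun c : V → Bool =>
        c u = k1 ∧ c v = k2 ∧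
        ((G.neighborFinset u).filter (fun x => c x = c u)).card = i1 ∧
        ((G.neighborFinset v).filter (fun x => c x = c v)).card = i2)).card : ℝ)
      / 2 ^ (Fintype.card V)
    = if k1 ≠ k2 then
        ((d-1).choose i1 * (d-1).choose i2 : ℕ) / (4 : ℝ) ^ d
      else
        ((chooseZ (d-1) ((i1 : ℤ) - 1) * chooseZ (d-1) ((i2 : ℤ) - 1) : ℕ) : ℝ) / 4 ^ d := by
  classical
  have hne : u ≠ v := G.ne_of_adj huv
  have hvNu : v ∈ G.neighborFinset u := by simp [huv]
  have huNv : u ∈ G.neighborFinset v := by simp [huv.symm]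
  set A : Finset V := (G.neighborFinset u).erase v with hA
  set B : Finset V := (G.neighborFinset v).erase u with hB
  have hdeg : ∀ w, (G.neighborFinset w).card = d := fun w => hreg w
  have hcA : A.card = d - 1 := by rw [hA, card_erase_of_mem hvNu, hdeg u]
  have hcB : B.card = d - 1 := by rw [hB, card_erase_of_mem huNv, hdeg v]
  have huA : u ∉ A := by simp [hA]
  have hvB : v ∉ B := by simp [hB]
  have hvA : v ∉ A := by simp [hA]
  have huB : u ∉ B := by simp [hB]
  have hAB : Disjoint A B := by
    rw [disjoint_left]
    intro x hxA hxB
    have h1 : G.Adj u x := by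
      have := mem_of_mem_erase hxA; rwa [SimpleGraph.mem_neighborFinset] at this
    have h2 : G.Adj v x := by
      have := mem_of_mem_erase hxB; rwa [SimpleGraph.mem_neighborFinset] at this
    exact htf {u, v, x} (SimpleGraph.is3Clique_triple_iff.mpr ⟨huv, h1, h2⟩)
  have hNu : G.neighborFinset u = insert v A := (insert_erase hvNu).symm
  have hNv : G.neighborFinset v = insert u B := (insert_erase huNv).symm
  have h2d : 2 + A.card + B.card = 2 * d := by
    rw [hcA, hcB]; omega
  have hn2d : 2 * d ≤ Fintype.card V := by
    have := card_le_card (subset_univ (insert u (insert v (A ∪ B))))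
    rw [card_univ, card_insert_of_notMem (by simp [hne, huA, huB]),
      card_insert_of_notMem (by simp [hvA, hvB]), card_union_of_disjoint hAB,
      hcA, hcB] at this
    omega
  have hpow : (2 : ℝ) ^ (Fintype.card V) =
      2 ^ (Fintype.card V - 2 * d) * 4 ^ d := by
    have : (4 : ℝ) ^ d = 2 ^ (2 * d) := by rw [pow_mul]; norm_num
    rw [this, ← pow_add, Nat.sub_add_cancel hn2d]
  have key : ∀ j1 j2 : ℕ,
      (Finset.univ.filter (fun c : V → Bool =>
        c u = k1 ∧ c v = k2 ∧ (A.filter (fun x => c x = k1)).card = j1 ∧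
        (B.filter (fun x => c x = k2)).card = j2)).card
      = (d-1).choose j1 * ((d-1).choose j2 * 2 ^ (Fintype.card V - 2 * d)) := by
    intro j1 j2
    rw [core u v hne A B hAB huA huB hvA hvB k1 k2 j1 j2, h2d, hcA, hcB]
  have harith : ∀ j1 j2 : ℕ,
      (((d-1).choose j1 * ((d-1).choose j2 * 2 ^ (Fintype.card V - 2 * d)) : ℕ) : ℝ)
      / 2 ^ (Fintype.card V)
      = ((d-1).choose j1 * (d-1).choose j2 : ℕ) / (4 : ℝ) ^ d := by
    intro j1 j2
    push_cast
    rw [hpow]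
    have h4 : (4 : ℝ) ^ d ≠ 0 := by positivity
    have h2 : (2 : ℝ) ^ (Fintype.card V - 2 * d) ≠ 0 := by positivity
    field_simp
  by_cases hk : k1 = k2
  · subst hk
    simp only [ne_eq, not_true_eq_false, if_false]
    by_cases hz1 : i1 = 0
    · subst hz1
      have hempty : (Finset.univ.filter (fun c : V → Bool =>
          c u = k1 ∧ c v = k1 ∧
          ((G.neighborFinset u).filter (fun x => c x = c u)).card = 0 ∧
          ((G.neighborFinset v).filter (fun x => c x = c v)).card = i2)) = ∅ := by
        rw [filter_eq_empty_iff]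
        rintro c - ⟨h1, h2, h3, h4⟩
        have : v ∈ (G.neighborFinset u).filter (fun x => c x = c u) := by
          simp [hvNu, h1, h2]
        have := card_pos.mpr ⟨v, this⟩
        omega
      rw [hempty]
      simp [chooseZ]
    by_cases hz2 : i2 = 0
    · subst hz2
      have hempty : (Finset.univ.filter (fun c : V → Bool =>
          c u = k1 ∧ c v = k1 ∧
          ((G.neighborFinset u).filter (fun x => c x = c u)).card = i1 ∧
          ((G.neighborFinset v).filter (fun x => c x = c v)).card = 0)) = ∅ := by
        rw [filter_eq_empty_iff]
        rintro c - ⟨h1, h2, h3, h4⟩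
        have : u ∈ (G.neighborFinset v).filter (fun x => c x = c v) := by
          simp [huNv, h1, h2]
        have := card_pos.mpr ⟨u, this⟩
        omega
      rw [hempty]
      simp [chooseZ]
    · -- i1, i2 ≥ 1
      have hcz1 : chooseZ (d-1) ((i1 : ℤ) - 1) = (d-1).choose (i1 - 1) := by
        rw [chooseZ, if_pos (by omega)]
        congr 1
        omega
      have hcz2 : chooseZ (d-1) ((i2 : ℤ) - 1) = (d-1).choose (i2 - 1) := by
        rw [chooseZ, if_pos (by omega)]
        congr 1
        omega
      have hset : (Finset.univ.filter (fun c : V → Bool =>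
          c u = k1 ∧ c v = k1 ∧
          ((G.neighborFinset u).filter (fun x => c x = c u)).card = i1 ∧
          ((G.neighborFinset v).filter (fun x => c x = c v)).card = i2))
        = (Finset.univ.filter (fun c : V → Bool =>
          c u = k1 ∧ c v = k1 ∧ (A.filter (fun x => c x = k1)).card = i1 - 1 ∧
          (B.filter (fun x => c x = k1)).card = i2 - 1)) := by
        apply filter_congr
        rintro c -
        constructor
        · rintro ⟨h1, h2, h3, h4⟩
          refine ⟨h1, h2, ?_, ?_⟩
          · rw [hNu, filter_insert, if_pos (by rw [h1, h2]),
              card_insert_of_notMem (by simp [hvA]), h1] at h3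
            omega
          · rw [hNv, filter_insert, if_pos (by rw [h1, h2]),
              card_insert_of_notMem (by simp [huB]), h2] at h4
            omega
        · rintro ⟨h1, h2, h3, h4⟩
          refine ⟨h1, h2, ?_, ?_⟩
          · rw [hNu, filter_insert, if_pos (by rw [h1, h2]),
              card_insert_of_notMem (by simp [hvA]), h1, h3]
            omega
          · rw [hNv, filter_insert, if_pos (by rw [h1, h2]),
              card_insert_of_notMem (by simp [huB]), h2, h4]
            omega
      rw [hset, key (i1 - 1) (i2 - 1), harith, hcz1, hcz2]
  · simp only [ne_eq, hk, not_false_eq_true, if_true]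
    have hk2 : k2 = !k1 := by revert hk; cases k1 <;> cases k2 <;> simp
    have hset : (Finset.univ.filter (fun c : V → Bool =>
        c u = k1 ∧ c v = k2 ∧
        ((G.neighborFinset u).filter (fun x => c x = c u)).card = i1 ∧
        ((G.neighborFinset v).filter (fun x => c x = c v)).card = i2))
      = (Finset.univ.filter (fun c : V → Bool =>
        c u = k1 ∧ c v = k2 ∧ (A.filter (fun x => c x = k1)).card = i1 ∧
        (B.filter (fun x => c x = k2)).card = i2)) := by
      apply filter_congr
      rintro c -
      have e1 : ∀ (h1 : c u = k1) (h2 : c v = k2),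
          (G.neighborFinset u).filter (fun x => c x = c u)
          = A.filter (fun x => c x = k1) := by
        intro h1 h2
        rw [hNu, filter_insert, if_neg (by rw [h1, h2, hk2]; simp), h1]
      have e2 : ∀ (h1 : c u = k1) (h2 : c v = k2),
          (G.neighborFinset v).filter (fun x => c x = c v)
          = B.filter (fun x => c x = k2) := by
        intro h1 h2
        rw [hNv, filter_insert, if_neg (by rw [h1, h2, hk2]; simp), h2]
      constructor
      · rintro ⟨h1, h2, h3, h4⟩
        exact ⟨h1, h2, by rw [← e1 h1 h2]; exact h3, by rw [← e2 h1 h2]; exact h4⟩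
      · rintro ⟨h1, h2, h3, h4⟩
        exact ⟨h1, h2, by rw [e1 h1 h2]; exact h3, by rw [e2 h1 h2]; exact h4⟩
    rw [hset, key i1 i2, harith]
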